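/- arXiv:1908.09318 — 3 statements merged into one kernel-verified Lean document; each statement's English description precedes it below -/
import Mathlib

section
/- Let ⟨G, τ, W⟩ be a path story with G a path on n vertices, let h = ⌈n/W⌉, and let B_1, …, B_h be its buckets. Define the x-buckets by B^x_1 = B_1 and B^x_i = B_{2i−2} ∪ B_{2i−1} for i = 2, …, ⌈(h+1)/2⌉, and the y-buckets by B^y_j = B_{2j−1} ∪ B_{2j} for j = 1, …, ⌈h/2⌉ (undefined buckets being empty). Then there exists a map φ from the vertices of G to the integer grid [1,2W] × [1,2W] such that, for every x-bucket B^x_i and every y-bucket B^y_j, the restriction of φ to B^x_i (respectively B^y_j) is injective and is a planar straight-line drawing of the subgraph of G induced by B^x_i (respectively B^y_j). -/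
/-- `φ` restricted to the vertex set `S` is a planar straight-line drawing of the
subgraph of `G` induced by `S`. -/
def IsPlanarDrawingOn {V : Type} (G : SimpleGraph V) (S : Set V) (φ : V → ℝ × ℝ) : Prop :=
  Set.InjOn φ S ∧
  (∀ u v w, u ∈ S → v ∈ S → w ∈ S → G.Adj u v → w ≠ u → w ≠ v →
    φ w ∉ segment ℝ (φ u) (φ v)) ∧
  (∀ u v x y, u ∈ S → v ∈ S → x ∈ S → y ∈ S → G.Adj u v → G.Adj x y →
    u ≠ x → u ≠ y → v ≠ x → v ≠ y →
    segment ℝ (φ u) (φ v) ∩ segment ℝ (φ x) (φ y) = ∅) ∧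
  (∀ u v w, u ∈ S → v ∈ S → w ∈ S → G.Adj u v → G.Adj u w → v ≠ w →
    segment ℝ (φ u) (φ v) ∩ segment ℝ (φ u) (φ w) = {φ u})

/-- The `i`-th bucket `B_i = {v : (i-1)W + 1 ≤ τ(v) ≤ min (iW) n}` of a graph story
on `n` vertices with labeling `τ` (vertex `v` has label `(τ v).val + 1 ∈ {1, …, n}`)
and window size `W`.  For `i` out of range this set is empty. -/
def bucket {n : ℕ} (τ : Fin n ≃ Fin n) (W i : ℕ) : Set (Fin n) :=
  {v | (i - 1) * W + 1 ≤ (τ v).val + 1 ∧ (τ v).val + 1 ≤ min (i * W) n}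

/-- The `i`-th x-bucket: `B^x_1 = B_1` and `B^x_i = B_{2i-2} ∪ B_{2i-1}` for `i ≥ 2`. -/
def xBucket {n : ℕ} (τ : Fin n ≃ Fin n) (W i : ℕ) : Set (Fin n) :=
  if i = 1 then bucket τ W 1 else bucket τ W (2 * i - 2) ∪ bucket τ W (2 * i - 1)

/-- The `j`-th y-bucket: `B^y_j = B_{2j-1} ∪ B_{2j}`. -/
def yBucket {n : ℕ} (τ : Fin n ≃ Fin n) (W j : ℕ) : Set (Fin n) :=
  bucket τ W (2 * j - 1) ∪ bucket τ W (2 * j)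

/-- The point `p` is a grid point of the integer grid `[a,b] × [c,d]`. -/
def onGrid (a b c d : ℤ) (p : ℝ × ℝ) : Prop :=
  ∃ x y : ℤ, p = ((x : ℝ), (y : ℝ)) ∧ a ≤ x ∧ x ≤ b ∧ c ≤ y ∧ y ≤ d

namespace PSBAux

open Finset

/-! ### Index arithmetic -/

/-- The (1-based) bucket index of a vertex with (0-based) label `t`. -/
def bIdx (W t : ℕ) : ℕ := t / W + 1

/-- The x-bucket index of a vertex with label `t`. -/
def xIdx (W t : ℕ) : ℕ := (bIdx W t + 2) / 2

/-- The y-bucket index of a vertex with label `t`. -/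
def yIdx (W t : ℕ) : ℕ := (bIdx W t + 1) / 2

lemma div_eq_iff' {W : ℕ} (hW : 0 < W) (t j : ℕ) :
    t / W = j ↔ j * W ≤ t ∧ t < (j + 1) * W := by
  obtain ⟨q, r, hr, ht, hq⟩ : ∃ q r, r < W ∧ t = W * q + r ∧ t / W = q :=
    ⟨t / W, t % W, Nat.mod_lt t hW, (Nat.div_add_mod t W).symm, rfl⟩
  constructor
  · intro h
    have hqj : q = j := hq.symm.trans h
    subst hqj
    constructor
    · rw [ht, Nat.mul_comm q W]
      exact Nat.le_add_right _ _
    · rw [ht]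
      have e : (q + 1) * W = W * q + W := by rw [Nat.succ_mul, Nat.mul_comm q W]
      rw [e]
      exact Nat.add_lt_add_left hr _
  · rintro ⟨h1, h2⟩
    exact Nat.div_eq_of_lt_le h1 h2

lemma one_le_bIdx (W t : ℕ) : 1 ≤ bIdx W t := Nat.le_add_left 1 _

lemma mem_bucket_iff {n : ℕ} (τ : Fin n ≃ Fin n) {W : ℕ} (hW : 0 < W) (i : ℕ) (v : Fin n) :
    v ∈ bucket τ W i ↔ bIdx W (τ v).val = i := by
  have ht : (τ v).val < n := (τ v).isLt
  simp only [bucket, Set.mem_setOf_eq, bIdx]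
  rcases i with _ | j
  · rw [Nat.zero_mul, Nat.min_comm, Nat.min_zero]
    exact iff_of_false (by omega) (Nat.succ_ne_zero _)
  · have e0 : (j + 1) - 1 = j := rfl
    rw [e0]
    constructor
    · rintro ⟨h1, h2⟩
      have h2a : (τ v).val + 1 ≤ (j + 1) * W := le_trans h2 (min_le_left _ _)
      have hq : (τ v).val / W = j :=
        (div_eq_iff' hW _ j).mpr ⟨Nat.succ_le_succ_iff.mp h1, h2a⟩
      rw [hq]
    · intro h
      have hq : (τ v).val / W = j := Nat.succ_injective h
      obtain ⟨h1, h2⟩ := (div_eq_iff' hW _ j).mp hq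
      exact ⟨Nat.succ_le_succ h1, le_min h2 ht⟩

lemma mem_xBucket_iff {n : ℕ} (τ : Fin n ≃ Fin n) {W : ℕ} (hW : 0 < W) {i : ℕ} (hi : 1 ≤ i)
    (v : Fin n) : v ∈ xBucket τ W i ↔ xIdx W (τ v).val = i := by
  have hb := one_le_bIdx W (τ v).val
  unfold xBucket
  by_cases h1 : i = 1
  · subst h1
    rw [if_pos rfl]
    simp only [mem_bucket_iff τ hW, xIdx]
    generalize bIdx W (τ v).val = b at hb ⊢
    omega
  · rw [if_neg h1]
    simp only [Set.mem_union, mem_bucket_iff τ hW, xIdx]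
    generalize bIdx W (τ v).val = b at hb ⊢
    omega

lemma mem_yBucket_iff {n : ℕ} (τ : Fin n ≃ Fin n) {W : ℕ} (hW : 0 < W) {j : ℕ} (hj : 1 ≤ j)
    (v : Fin n) : v ∈ yBucket τ W j ↔ yIdx W (τ v).val = j := by
  have hb := one_le_bIdx W (τ v).val
  simp only [yBucket, Set.mem_union, mem_bucket_iff τ hW, yIdx]
  generalize bIdx W (τ v).val = b at hb ⊢
  omega

/-- Labels in one x-bucket lie in an interval of length `2W`. -/
lemma xIdx_bound {W : ℕ} (hW : 0 < W) (t : ℕ) :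
    (2 * xIdx W t - 3) * W ≤ t ∧ t < (2 * xIdx W t - 3) * W + 2 * W := by
  obtain ⟨q, r, hr, ht, hq⟩ : ∃ q r, r < W ∧ t = W * q + r ∧ t / W = q :=
    ⟨t / W, t % W, Nat.mod_lt t hW, (Nat.div_add_mod t W).symm, rfl⟩
  have hk : xIdx W t = (q + 3) / 2 := by rw [xIdx, bIdx, hq]
  rw [hk]
  have hcq : 2 * ((q + 3) / 2) - 3 = q ∨ 2 * ((q + 3) / 2) - 3 + 1 = q := by omega
  generalize hX : 2 * ((q + 3) / 2) - 3 = c at hcq ⊢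
  rcases hcq with rfl | hc
  · rw [ht, Nat.mul_comm c W]
    exact ⟨Nat.le_add_right _ _, Nat.add_lt_add_left (show r < 2 * W by omega) _⟩
  · subst hc
    rw [ht]
    have e : W * (c + 1) = c * W + W := by rw [Nat.mul_succ, Nat.mul_comm]
    rw [e, Nat.add_assoc]
    exact ⟨Nat.le_add_right _ _, Nat.add_lt_add_left (show W + r < 2 * W by omega) _⟩

lemma yIdx_bound {W : ℕ} (hW : 0 < W) (t : ℕ) :
    (2 * yIdx W t - 2) * W ≤ t ∧ t < (2 * yIdx W t - 2) * W + 2 * W := by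
  obtain ⟨q, r, hr, ht, hq⟩ : ∃ q r, r < W ∧ t = W * q + r ∧ t / W = q :=
    ⟨t / W, t % W, Nat.mod_lt t hW, (Nat.div_add_mod t W).symm, rfl⟩
  have hk : yIdx W t = (q + 2) / 2 := by rw [yIdx, bIdx, hq]
  rw [hk]
  have hcq : 2 * ((q + 2) / 2) - 2 = q ∨ 2 * ((q + 2) / 2) - 2 + 1 = q := by omega
  generalize hX : 2 * ((q + 2) / 2) - 2 = c at hcq ⊢
  rcases hcq with rfl | hc
  · rw [ht, Nat.mul_comm c W]
    exact ⟨Nat.le_add_right _ _, Nat.add_lt_add_left (show r < 2 * W by omega) _⟩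
  · subst hc
    rw [ht]
    have e : W * (c + 1) = c * W + W := by rw [Nat.mul_succ, Nat.mul_comm]
    rw [e, Nat.add_assoc]
    exact ⟨Nat.le_add_right _ _, Nat.add_lt_add_left (show W + r < 2 * W by omega) _⟩

/-! ### The coordinates -/

/-- x-coordinate: the rank of `v` within its x-bucket. -/
def xc {n : ℕ} (τ : Fin n ≃ Fin n) (W : ℕ) (v : Fin n) : ℕ :=
  1 + (Finset.univ.filter
    (fun w : Fin n => xIdx W (τ w).val = xIdx W (τ v).val ∧ w < v)).card

/-- y-coordinate: the rank of `v` within its y-bucket. -/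
def yc {n : ℕ} (τ : Fin n ≃ Fin n) (W : ℕ) (v : Fin n) : ℕ :=
  1 + (Finset.univ.filter
    (fun w : Fin n => yIdx W (τ w).val = yIdx W (τ v).val ∧ w < v)).card

lemma card_filter_le_of_bound {n W : ℕ} (τ : Fin n ≃ Fin n) (base : ℕ)
    (P : Fin n → Prop) [DecidablePred P]
    (hb : ∀ w, P w → base ≤ (τ w).val ∧ (τ w).val < base + 2 * W) :
    (Finset.univ.filter P).card ≤ 2 * W := by
  have : (Finset.univ.filter P).card ≤ (Finset.range (2 * W)).card := by
    apply Finset.card_le_card_of_injOn (fun w => (τ w).val - base)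
    · intro w hw
      simp only [Finset.mem_coe, Finset.mem_filter, Finset.mem_univ, true_and] at hw
      have := hb w hw
      simp only [Finset.mem_coe, Finset.mem_range]
      omega
    · intro w1 hw1 w2 hw2 he
      simp only [Finset.coe_filter, Set.mem_setOf_eq, Finset.mem_univ, true_and] at hw1 hw2
      replace he : (τ w1).val - base = (τ w2).val - base := he
      have b1 := hb w1 hw1
      have b2 := hb w2 hw2
      have : (τ w1).val = (τ w2).val := by omega
      exact τ.injective (Fin.ext this)
  simpa using this

lemma xc_le {n W : ℕ} (hW : 0 < W) (τ : Fin n ≃ Fin n) (v : Fin n) : xc τ W v ≤ 2 * W := by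
  classical
  set A := Finset.univ.filter
    (fun w : Fin n => xIdx W (τ w).val = xIdx W (τ v).val ∧ w < v) with hA
  set B := Finset.univ.filter (fun w : Fin n => xIdx W (τ w).val = xIdx W (τ v).val) with hB
  have hvB : v ∈ B := by simp [hB]
  have hvA : v ∉ A := by simp [hA]
  have hsub : insert v A ⊆ B := by
    intro w hw
    rcases Finset.mem_insert.mp hw with rfl | hw
    · exact hvB
    · simp only [hA, Finset.mem_filter] at hw
      simp [hB, hw.2.1]
  have hcard : A.card + 1 ≤ B.card := by
    have := Finset.card_le_card hsub
    rwa [Finset.card_insert_of_notMem hvA] at this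
  have hBle : B.card ≤ 2 * W := by
    apply card_filter_le_of_bound τ ((2 * xIdx W (τ v).val - 3) * W)
    intro w hw
    have := xIdx_bound hW (τ w).val
    rw [hw] at this
    exact this
  simp only [xc, ← hA]
  omega

lemma yc_le {n W : ℕ} (hW : 0 < W) (τ : Fin n ≃ Fin n) (v : Fin n) : yc τ W v ≤ 2 * W := by
  classical
  set A := Finset.univ.filter
    (fun w : Fin n => yIdx W (τ w).val = yIdx W (τ v).val ∧ w < v) with hA
  set B := Finset.univ.filter (fun w : Fin n => yIdx W (τ w).val = yIdx W (τ v).val) with hB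
  have hvB : v ∈ B := by simp [hB]
  have hvA : v ∉ A := by simp [hA]
  have hsub : insert v A ⊆ B := by
    intro w hw
    rcases Finset.mem_insert.mp hw with rfl | hw
    · exact hvB
    · simp only [hA, Finset.mem_filter] at hw
      simp [hB, hw.2.1]
  have hcard : A.card + 1 ≤ B.card := by
    have := Finset.card_le_card hsub
    rwa [Finset.card_insert_of_notMem hvA] at this
  have hBle : B.card ≤ 2 * W := by
    apply card_filter_le_of_bound τ ((2 * yIdx W (τ v).val - 2) * W)
    intro w hw
    have := yIdx_bound hW (τ w).val
    rw [hw] at this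
    exact this
  simp only [yc, ← hA]
  omega

lemma xc_strict {n W : ℕ} (τ : Fin n ≃ Fin n) {u v : Fin n}
    (h : xIdx W (τ u).val = xIdx W (τ v).val) (huv : u < v) : xc τ W u < xc τ W v := by
  classical
  have hss : (Finset.univ.filter
        (fun w : Fin n => xIdx W (τ w).val = xIdx W (τ u).val ∧ w < u)) ⊂
      (Finset.univ.filter
        (fun w : Fin n => xIdx W (τ w).val = xIdx W (τ v).val ∧ w < v)) := by
    constructor
    · intro w hw
      simp only [Finset.mem_filter, Finset.mem_univ, true_and] at hw ⊢
      exact ⟨h ▸ hw.1, lt_trans hw.2 huv⟩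
    · intro hcon
      have hu : u ∈ Finset.univ.filter
          (fun w : Fin n => xIdx W (τ w).val = xIdx W (τ v).val ∧ w < v) := by
        simp [h, huv]
      have := hcon hu
      simp at this
  have := Finset.card_lt_card hss
  simp only [xc]
  omega

lemma yc_strict {n W : ℕ} (τ : Fin n ≃ Fin n) {u v : Fin n}
    (h : yIdx W (τ u).val = yIdx W (τ v).val) (huv : u < v) : yc τ W u < yc τ W v := by
  classical
  have hss : (Finset.univ.filter
        (fun w : Fin n => yIdx W (τ w).val = yIdx W (τ u).val ∧ w < u)) ⊂
      (Finset.univ.filter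
        (fun w : Fin n => yIdx W (τ w).val = yIdx W (τ v).val ∧ w < v)) := by
    constructor
    · intro w hw
      simp only [Finset.mem_filter, Finset.mem_univ, true_and] at hw ⊢
      exact ⟨h ▸ hw.1, lt_trans hw.2 huv⟩
    · intro hcon
      have hu : u ∈ Finset.univ.filter
          (fun w : Fin n => yIdx W (τ w).val = yIdx W (τ v).val ∧ w < v) := by
        simp [h, huv]
      have := hcon hu
      simp at this
  have := Finset.card_lt_card hss
  simp only [yc]
  omega

/-! ### Geometry of segments under a linear functional -/

lemma seg_map (f : (ℝ × ℝ) →ₗ[ℝ] ℝ) {a b p : ℝ × ℝ} (hp : p ∈ segment ℝ a b) :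
    f p ∈ segment ℝ (f a) (f b) := by
  obtain ⟨c, d, hc, hd, hcd, rfl⟩ := hp
  exact ⟨c, d, hc, hd, hcd, by simp⟩

lemma seg_bounds (f : (ℝ × ℝ) →ₗ[ℝ] ℝ) {a b p : ℝ × ℝ} (hp : p ∈ segment ℝ a b) :
    min (f a) (f b) ≤ f p ∧ f p ≤ max (f a) (f b) := by
  have h := seg_map f hp
  rw [segment_eq_uIcc, Set.uIcc, Set.mem_Icc] at h
  exact ⟨h.1, h.2⟩

lemma seg_endpoint (f : (ℝ × ℝ) →ₗ[ℝ] ℝ) {a b p : ℝ × ℝ} (hab : f a ≠ f b)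
    (hp : p ∈ segment ℝ a b) (hfp : f p = f a) : p = a := by
  obtain ⟨c, d, hc, hd, hcd, rfl⟩ := hp
  have h1 : c * f a + d * f b = f a := by
    simpa [smul_eq_mul] using hfp
  have key : d * (f b - f a) = 0 := by linear_combination h1 - f a * hcd
  have hd0 : d = 0 := by
    rcases mul_eq_zero.mp key with h | h
    · exact h
    · exact absurd (by linarith : f a = f b) hab
  have hc1 : c = 1 := by linarith
  rw [hd0, hc1]
  simp

/-! ### The core planarity lemma -/

lemma core {n : ℕ} (S : Set (Fin n)) (φ : Fin n → ℝ × ℝ) (f : (ℝ × ℝ) →ₗ[ℝ] ℝ)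
    (hmono : ∀ u v : Fin n, u ∈ S → v ∈ S → u < v → f (φ u) < f (φ v)) :
    IsPlanarDrawingOn (SimpleGraph.pathGraph n) S φ := by
  have hm : ∀ u v : Fin n, u ∈ S → v ∈ S → u.val < v.val → f (φ u) < f (φ v) := by
    intro u v hu hv h
    exact hmono u v hu hv (Fin.lt_def.mpr h)
  refine ⟨?_, ?_, ?_, ?_⟩
  · -- injectivity
    intro u hu v hv h
    by_contra hne
    rcases Ne.lt_or_gt hne with hlt | hlt
    · exact absurd (congrArg f h) (ne_of_lt (hmono u v hu hv hlt))
    · exact absurd (congrArg f h).symm (ne_of_lt (hmono v u hv hu hlt))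
  · -- no vertex interior to an edge
    intro u v w hu hv hw hadj hwu hwv hmem
    rw [SimpleGraph.pathGraph_adj] at hadj
    have hb := seg_bounds f hmem
    have hwu' : w.val ≠ u.val := fun h => hwu (Fin.ext h)
    have hwv' : w.val ≠ v.val := fun h => hwv (Fin.ext h)
    have hcase : (w.val < u.val ∧ w.val < v.val) ∨ (u.val < w.val ∧ v.val < w.val) := by
      omega
    rcases hcase with ⟨h1, h2⟩ | ⟨h1, h2⟩
    · have g1 := hm w u hw hu h1
      have g2 := hm w v hw hv h2
      exact absurd hb.1 (not_le.mpr (lt_min g1 g2))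
    · have g1 := hm u w hu hw h1
      have g2 := hm v w hv hw h2
      exact absurd hb.2 (not_le.mpr (max_lt g1 g2))
  · -- independent edges are disjoint
    intro u v x y hu hv hx hy hadj1 hadj2 hux huy hvx hvy
    rw [SimpleGraph.pathGraph_adj] at hadj1 hadj2
    have hux' : u.val ≠ x.val := fun h => hux (Fin.ext h)
    have huy' : u.val ≠ y.val := fun h => huy (Fin.ext h)
    have hvx' : v.val ≠ x.val := fun h => hvx (Fin.ext h)
    have hvy' : v.val ≠ y.val := fun h => hvy (Fin.ext h)
    have hcase : (u.val < x.val ∧ u.val < y.val ∧ v.val < x.val ∧ v.val < y.val) ∨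
        (x.val < u.val ∧ x.val < v.val ∧ y.val < u.val ∧ y.val < v.val) := by omega
    ext p
    simp only [Set.mem_inter_iff, Set.mem_empty_iff_false, iff_false, not_and]
    intro hp1 hp2
    have b1 := seg_bounds f hp1
    have b2 := seg_bounds f hp2
    rcases hcase with ⟨h1, h2, h3, h4⟩ | ⟨h1, h2, h3, h4⟩
    · have g1 := hm u x hu hx h1
      have g2 := hm u y hu hy h2
      have g3 := hm v x hv hx h3
      have g4 := hm v y hv hy h4
      have : max (f (φ u)) (f (φ v)) < min (f (φ x)) (f (φ y)) :=
        max_lt (lt_min g1 g2) (lt_min g3 g4)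
      have c1 : f p ≤ max (f (φ u)) (f (φ v)) := b1.2
      have c2 : min (f (φ x)) (f (φ y)) ≤ f p := b2.1
      linarith
    · have g1 := hm x u hx hu h1
      have g2 := hm x v hx hv h2
      have g3 := hm y u hy hu h3
      have g4 := hm y v hy hv h4
      have : max (f (φ x)) (f (φ y)) < min (f (φ u)) (f (φ v)) :=
        max_lt (lt_min g1 g2) (lt_min g3 g4)
      have c1 : f p ≤ max (f (φ x)) (f (φ y)) := b2.2
      have c2 : min (f (φ u)) (f (φ v)) ≤ f p := b1.1
      linarith
  · -- edges sharing an endpoint meet only there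
    intro u v w hu hv hw hadj1 hadj2 hvw
    rw [SimpleGraph.pathGraph_adj] at hadj1 hadj2
    have hvw' : v.val ≠ w.val := fun h => hvw (Fin.ext h)
    have haux : ∀ a b : Fin n, a ∈ S → b ∈ S → a.val < u.val → u.val < b.val →
        segment ℝ (φ u) (φ a) ∩ segment ℝ (φ u) (φ b) = {φ u} := by
      intro a b ha hb hau hub
      have g1 := hm a u ha hu hau
      have g2 := hm u b hu hb hub
      apply Set.eq_singleton_iff_unique_mem.mpr
      constructor
      · exact ⟨left_mem_segment ℝ _ _, left_mem_segment ℝ _ _⟩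
      · rintro p ⟨hp1, hp2⟩
        have b1 := seg_bounds f hp1
        have b2 := seg_bounds f hp2
        have hfp : f p = f (φ u) := by
          have e1 : max (f (φ u)) (f (φ a)) = f (φ u) := max_eq_left g1.le
          have e2 : min (f (φ u)) (f (φ b)) = f (φ u) := min_eq_left g2.le
          have := b1.2
          have := b2.1
          rw [e1] at b1
          rw [e2] at b2
          linarith [b1.2, b2.1]
        exact seg_endpoint f (ne_of_gt g1) hp1 hfp
    rcases hadj1 with h1 | h1 <;> rcases hadj2 with h2 | h2
    · omega
    · rw [Set.inter_comm]
      exact haux w v hw hv (by omega) (by omega)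
    · exact haux v w hv hw (by omega) (by omega)
    · omega

end PSBAux

/-- For every path story `⟨G, τ, W⟩` with `h = ⌈n/W⌉` buckets,
there is a placement `φ` of the vertices on the `[1, 2W] × [1, 2W]` grid such that
the restriction of `φ` to each x-bucket `B^x_i`, `i = 1, …, ⌈(h+1)/2⌉`, and to each
y-bucket `B^y_j`, `j = 1, …, ⌈h/2⌉`, is injective and a planar straight-line drawing
of the subgraph of `G` induced by that bucket. -/
theorem path_story_bucket_drawings (n W : ℕ) (hW : 0 < W) (τ : Fin n ≃ Fin n) :
    ∃ φ : Fin n → ℝ × ℝ,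
      (∀ v, onGrid 1 (2 * (W : ℤ)) 1 (2 * (W : ℤ)) (φ v)) ∧
      (∀ i, 1 ≤ i → i ≤ ((n + W - 1) / W + 2) / 2 →
        IsPlanarDrawingOn (SimpleGraph.pathGraph n) (xBucket τ W i) φ) ∧
      (∀ j, 1 ≤ j → j ≤ ((n + W - 1) / W + 1) / 2 →
        IsPlanarDrawingOn (SimpleGraph.pathGraph n) (yBucket τ W j) φ) := by
  classical
  open PSBAux in
  refine ⟨fun v => ((xc τ W v : ℝ), (yc τ W v : ℝ)), ?_, ?_, ?_⟩
  · intro v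
    refine ⟨(xc τ W v : ℤ), (yc τ W v : ℤ), by push_cast; rfl, ?_, ?_, ?_, ?_⟩
    · exact_mod_cast Nat.le_add_right 1 _
    · exact_mod_cast PSBAux.xc_le hW τ v
    · exact_mod_cast Nat.le_add_right 1 _
    · exact_mod_cast PSBAux.yc_le hW τ v
  · intro i hi _
    apply PSBAux.core _ _ (LinearMap.fst ℝ ℝ ℝ)
    intro u v hu hv huv
    have h1 := (PSBAux.mem_xBucket_iff τ hW hi u).mp hu
    have h2 := (PSBAux.mem_xBucket_iff τ hW hi v).mp hv
    simp only [LinearMap.fst_apply]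
    exact_mod_cast PSBAux.xc_strict τ (h1.trans h2.symm) huv
  · intro j hj _
    apply PSBAux.core _ _ (LinearMap.snd ℝ ℝ ℝ)
    intro u v hu hv huv
    have h1 := (PSBAux.mem_yBucket_iff τ hW hj u).mp hu
    have h2 := (PSBAux.mem_yBucket_iff τ hW hj v).mp hv
    simp only [LinearMap.snd_apply]
    exact_mod_cast PSBAux.yc_strict τ (h1.trans h2.symm) huv
end

section
/- Let F be a forest (an acyclic simple graph) on a finite vertex set V, and let b : V → ℤ be a labeling whose image is exactly {1, 2, …, h} for some h ≥ 1, such that every edge {u, v} of F satisfies |b(u) − b(v)| ≤ 1. Then edges can be added to F to obtain a tree (a connected acyclic simple graph) T on V, containing F as a subgraph, in which every edge {u, v} still satisfies |b(u) − b(v)| ≤ 1. -/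
open SimpleGraph

/-- Adding an edge between two vertices that are not reachable from one another
preserves acyclicity. -/
lemma acyclic_sup_edge {V : Type} {G : SimpleGraph V} (hG : G.IsAcyclic) {x y : V}
    (hxy : x ≠ y) (hreach : ¬G.Reachable x y) :
    (G ⊔ SimpleGraph.fromEdgeSet {s(x, y)}).IsAcyclic := by
  classical
  intro u c hc
  by_cases he : s(x, y) ∈ c.edges
  · have h2 := (SimpleGraph.adj_and_reachable_delete_edges_iff_exists_cycle
      (G := G ⊔ SimpleGraph.fromEdgeSet {s(x, y)}) (v := x) (w := y)).mpr ⟨u, c, hc, he⟩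
    apply hreach
    refine h2.2.mono ?_
    intro a b hab
    rw [SimpleGraph.deleteEdges_adj, SimpleGraph.sup_adj] at hab
    rcases hab with ⟨hab1 | hab1, hab2⟩
    · exact hab1
    · exact absurd ((SimpleGraph.fromEdgeSet_adj _).mp hab1).1 hab2
  · have hsub : ∀ e ∈ c.edges, e ∈ G.edgeSet := by
      intro e hecs
      have hmem := c.edges_subset_edgeSet hecs
      rw [SimpleGraph.edgeSet_sup] at hmem
      rcases hmem with hmem | hmem
      · exact hmem
      · rw [SimpleGraph.edgeSet_fromEdgeSet] at hmem
        rcases hmem with ⟨hmem1, _⟩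
        rw [Set.mem_singleton_iff] at hmem1
        exact absurd (hmem1 ▸ hecs) he
    exact hG (c.transfer G hsub) (hc.transfer hsub)

/-- Let `F` be a forest (an acyclic simple graph) on a finite vertex
set `V` and let `b : V → ℤ` be a labeling whose image is exactly `{1, …, h}` for some
`h ≥ 1`, such that `|b(u) - b(v)| ≤ 1` for every edge `{u, v}` of `F`.  Then edges
can be added to `F` so as to obtain a tree `T` on `V` containing `F` as a subgraph in
which every edge `{u, v}` still satisfies `|b(u) - b(v)| ≤ 1`. -/
theorem forest_completion_to_tree (V : Type) [Fintype V] [DecidableEq V]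
    (F : SimpleGraph V) (hF : F.IsAcyclic) (b : V → ℤ) (h : ℕ) (hh : 1 ≤ h)
    (hrange : Set.range b = Set.Icc (1 : ℤ) (h : ℤ))
    (hedges : ∀ u v, F.Adj u v → |b u - b v| ≤ 1) :
    ∃ T : SimpleGraph V, F ≤ T ∧ T.IsTree ∧ ∀ u v, T.Adj u v → |b u - b v| ≤ 1 := by
  classical
  set P : SimpleGraph V → Prop :=
    fun G => G.IsAcyclic ∧ ∀ u v, G.Adj u v → |b u - b v| ≤ 1 with hPdef
  obtain ⟨T, hFT, hmax⟩ := Finite.exists_le_maximal (p := P) (a := F) ⟨hF, hedges⟩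
  obtain ⟨hacyc, hTedges⟩ := hmax.prop
  -- facts from the range hypothesis
  have hmemIcc : ∀ v : V, b v ∈ Set.Icc (1 : ℤ) (h : ℤ) := by
    intro v
    rw [← hrange]; exact ⟨v, rfl⟩
  have hsurj : ∀ t : ℤ, 1 ≤ t → t ≤ (h : ℤ) → ∃ v, b v = t := by
    intro t h1 h2
    have : t ∈ Set.range b := by rw [hrange]; exact ⟨h1, h2⟩
    exact this
  -- any pair with close labels is reachable, else we could add the edge
  have near : ∀ x y : V, |b x - b y| ≤ 1 → T.Reachable x y := by
    intro x y hby
    by_contra hre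
    have hxy : x ≠ y := by rintro rfl; exact hre (Reachable.refl x)
    set T' := T ⊔ SimpleGraph.fromEdgeSet {s(x, y)} with hT'
    have hPT' : P T' := by
      constructor
      · exact acyclic_sup_edge hacyc hxy hre
      · intro u v huv
        rw [hT', SimpleGraph.sup_adj] at huv
        rcases huv with huv | huv
        · exact hTedges u v huv
        · rw [SimpleGraph.fromEdgeSet_adj, Set.mem_singleton_iff] at huv
          rcases huv with ⟨huv, -⟩
          rw [Sym2.eq_iff] at huv
          rcases huv with ⟨rfl, rfl⟩ | ⟨rfl, rfl⟩
          · exact hby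
          · rw [abs_sub_comm]; exact hby
    have hle := hmax.2 hPT' le_sup_left
    have hadj : T'.Adj x y := by
      rw [hT', SimpleGraph.sup_adj, SimpleGraph.fromEdgeSet_adj]
      exact Or.inr ⟨rfl, hxy⟩
    exact hre (hle hadj).reachable
  -- reachability between ordered pairs, by induction on the label gap
  have key : ∀ n : ℕ, ∀ x y : V, b x ≤ b y → (b y - b x).natAbs = n → T.Reachable x y := by
    intro n
    induction n with
    | zero =>
      intro x y _ h0
      have : b y - b x = 0 := by omega
      exact near x y (by rw [abs_sub_comm, this]; norm_num)
    | succ n ih =>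
      intro x y hle hgap
      have hlt : b x < b y := by
        rcases lt_or_eq_of_le hle with h' | h'
        · exact h'
        · exfalso; rw [h'] at hgap; simp at hgap
      have hx1 := hmemIcc x
      have hy1 := hmemIcc y
      obtain ⟨z, hz⟩ := hsurj (b x + 1) (by have := hx1.1; omega) (by
        have := hy1.2; omega)
      have h1 : T.Reachable x z := near x z (by rw [hz]; simp)
      have h2 : T.Reachable z y := by
        apply ih z y (by omega)
        omega
      exact h1.trans h2
  -- nonempty
  obtain ⟨v0, _⟩ := hsurj 1 le_rfl (by exact_mod_cast hh)
  have : Nonempty V := ⟨v0⟩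
  have hconn : T.Connected := by
    rw [SimpleGraph.connected_iff]
    refine ⟨fun x y => ?_, this⟩
    rcases le_total (b x) (b y) with hle | hle
    · exact key (b y - b x).natAbs x y hle rfl
    · exact (key (b x - b y).natAbs y x hle rfl).symm
  exact ⟨T, hFT, ⟨hconn, hacyc⟩, hTedges⟩
end

section
/- Let W be a positive integer, let F = T_1, …, T_k be a rooted ordered forest with m ≤ W vertices in total, and let φ be a ⌞-drawing of F. Then for each i ∈ {1, …, k}, all vertices of T_1, T_2, …, T_i are placed inside or on the boundary of the triangle delimited by the y-axis, the half-line ℓ(φ(r(T_i))) of slope −2 from the position of r(T_i), and the horizontal line y = 2W+2; explicitly, every vertex v of T_1 ∪ … ∪ T_i satisfies φ(v).x ≥ 0, φ(v).y ≥ 2W+2, and φ(v).y ≤ φ(r(T_i)).y − 2·φ(v).x. -/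
/-- A rooted ordered forest `T_1, …, T_k` on the finite vertex set `V`:
each vertex has an optional parent, the parent relation is well-founded (witnessed
by a depth function, so each tree is finite and rooted), the roots are enumerated in
order by `root : Fin k → V`, and `sib u v` expresses that `u` and `v` are children of
a common parent with `u` strictly to the left of `v` in the children order. -/
structure ROForest (V : Type) [Fintype V] (k : ℕ) where
  parent : V → Option V
  depth : V → ℕ
  depth_parent : ∀ v p, parent v = some p → depth v = depth p + 1
  root : Fin k → V
  root_parent : ∀ i, parent (root i) = none
  root_inj : Function.Injective root
  root_surj : ∀ v, parent v = none → ∃ i, root i = v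
  sib : V → V → Prop
  sib_sibling : ∀ u v, sib u v → ∃ p, parent u = some p ∧ parent v = some p
  sib_asymm : ∀ u v, sib u v → ¬ sib v u
  sib_total : ∀ p u v, parent u = some p → parent v = some p → u ≠ v → sib u v ∨ sib v u

variable {V : Type} [Fintype V] {k : ℕ}

/-- `v` belongs to the subtree rooted at `u`: from `v` one reaches `u` by repeatedly
passing to the parent. -/
def ROForest.inSubtree (F : ROForest V k) (u v : V) : Prop :=
  Relation.ReflTransGen (fun a b => F.parent a = some b) v u

/-- Cross product of two plane vectors. -/
def cross2 (p q : ℝ × ℝ) : ℝ := p.1 * q.2 - p.2 * q.1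

/-- The closed wedge `S(p)` at a point `p`, spanned by rotating the rightward
horizontal half-line at `p` clockwise until it overlaps the half-line `ℓ(p)` of
slope `-2`. -/
def wedgeS (p : ℝ × ℝ) : Set (ℝ × ℝ) :=
  {q | p.1 ≤ q.1 ∧ q.2 ≤ p.2 ∧ p.2 - 2 * (q.1 - p.1) ≤ q.2}

/-- The half-line `ℓ(p)` originating at `p` with slope `-2`, directed
rightward-downward. -/
def lineL (p : ℝ × ℝ) : Set (ℝ × ℝ) :=
  {q | p.1 ≤ q.1 ∧ q.2 = p.2 - 2 * (q.1 - p.1)}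

/-- The set of points of the plane covered by the drawing `φ` of the forest `F`:
all vertex points together with the closed segments of all (parent) edges. -/
def drawingSet (F : ROForest V k) (φ : V → ℝ × ℝ) : Set (ℝ × ℝ) :=
  Set.range φ ∪ ⋃ (u : V) (p : V) (_ : F.parent u = some p), segment ℝ (φ u) (φ p)

/-- `φ` is a ⌞-drawing of the rooted ordered forest `F = T_1, …, T_k` with window
size `W` (where `m = Fintype.card V ≤ W`): a planar straight-line strictly-upward
strictly-leftward order-preserving grid drawing such that
(i) it lies on the grid `[0, m-1] × [4W - 2m + 2, 4W]`;
(ii) the roots lie on the segment from `(0, 2W+2)` to `(0, 4W)` in this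
bottom-to-top order, with `r(T_k)` at `(0, 4W)`;
(iii) all vertices of `T_i` are strictly below all vertices of `T_{i+1}`;
(iv) for siblings `u` left of `u'`, the subtree of `u` is strictly below the
subtree of `u'`; and
(v) for each vertex `v`, the wedge `S(φ v)` meets the drawing only along `ℓ(φ v)`. -/
def IsLDrawing (W : ℕ) (F : ROForest V k) (φ : V → ℝ × ℝ) : Prop :=
  Function.Injective φ ∧
  -- planarity of the straight-line drawing:
  (∀ u p w, F.parent u = some p → w ≠ u → w ≠ p → φ w ∉ segment ℝ (φ u) (φ p)) ∧
  (∀ u p x q, F.parent u = some p → F.parent x = some q →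
    ({u, p} : Set V) ∩ {x, q} = ∅ →
    segment ℝ (φ u) (φ p) ∩ segment ℝ (φ x) (φ q) = ∅) ∧
  (∀ u p x q a, F.parent u = some p → F.parent x = some q →
    ({u, p} : Set V) ∩ {x, q} = {a} →
    segment ℝ (φ u) (φ p) ∩ segment ℝ (φ x) (φ q) = {φ a}) ∧
  -- strictly-upward and strictly-leftward:
  (∀ u p, F.parent u = some p → (φ u).2 < (φ p).2) ∧
  (∀ u p, F.parent u = some p → (φ p).1 < (φ u).1) ∧
  -- order-preserving: the edge towards a left sibling is to the left of the edge
  -- towards a right sibling (positive cross product of the downward edge vectors):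
  (∀ u u' p, F.parent u = some p → F.parent u' = some p → F.sib u u' →
    0 < cross2 (φ u - φ p) (φ u' - φ p)) ∧
  -- (i) grid drawing on [0, m-1] × [4W - 2m + 2, 4W]:
  (∀ v : V, ∃ x y : ℤ, φ v = ((x : ℝ), (y : ℝ)) ∧ 0 ≤ x ∧
    x ≤ (Fintype.card V : ℤ) - 1 ∧
    4 * (W : ℤ) - 2 * (Fintype.card V : ℤ) + 2 ≤ y ∧ y ≤ 4 * (W : ℤ)) ∧
  -- (ii) roots on the segment [(0, 2W+2), (0, 4W)], bottom-to-top, last at (0, 4W):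
  (∀ i : Fin k, (φ (F.root i)).1 = 0 ∧ 2 * (W : ℝ) + 2 ≤ (φ (F.root i)).2 ∧
    (φ (F.root i)).2 ≤ 4 * (W : ℝ)) ∧
  (∀ i j : Fin k, i < j → (φ (F.root i)).2 < (φ (F.root j)).2) ∧
  (∀ i : Fin k, (∀ j : Fin k, j ≤ i) → φ (F.root i) = ((0 : ℝ), (4 * (W : ℝ)))) ∧
  -- (iii) trees stacked bottom-to-top:
  (∀ i j : Fin k, i < j → ∀ u v, F.inSubtree (F.root i) u → F.inSubtree (F.root j) v →
    (φ u).2 < (φ v).2) ∧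
  -- (iv) subtrees of consecutive children stacked bottom-to-top:
  (∀ u u' p, F.parent u = some p → F.parent u' = some p → F.sib u u' →
    ∀ a c, F.inSubtree u a → F.inSubtree u' c → (φ a).2 < (φ c).2) ∧
  -- (v) the wedge of each vertex meets the drawing only along its half-line:
  (∀ v q, q ∈ wedgeS (φ v) → q ∈ drawingSet F φ → q ∈ lineL (φ v))

/-- In any ⌞-drawing `φ` of a rooted ordered forest
`F = T_1, …, T_k` with `m ≤ W` vertices in total, for each `i`, all vertices of
`T_1, …, T_i` lie inside or on the boundary of the triangle delimited by the y-axis,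
the half-line `ℓ(φ(r(T_i)))` of slope `-2`, and the horizontal line `y = 2W + 2`:
every vertex `v` of `T_1 ∪ … ∪ T_i` satisfies `φ(v).x ≥ 0`, `φ(v).y ≥ 2W + 2` and
`φ(v).y ≤ φ(r(T_i)).y - 2 φ(v).x`. -/
theorem lDrawing_inside_triangle (W : ℕ) (hW : 0 < W) (F : ROForest V k)
    (hm : Fintype.card V ≤ W) (φ : V → ℝ × ℝ) (hφ : IsLDrawing W F φ) :
    ∀ i j : Fin k, j ≤ i → ∀ v, F.inSubtree (F.root j) v →
      0 ≤ (φ v).1 ∧ 2 * (W : ℝ) + 2 ≤ (φ v).2 ∧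
      (φ v).2 ≤ (φ (F.root i)).2 - 2 * (φ v).1 := by
  obtain ⟨hinj, -, -, -, hup, hleft, -, hgrid, hroots, hrooty, -, hiii, -, hwedge⟩ := hφ
  intro i j hji v hv
  have hx : 0 ≤ (φ v).1 := by
    obtain ⟨x, y, hxy, hx0, -, -, -⟩ := hgrid v
    rw [hxy]; show (0:ℝ) ≤ (x:ℝ); exact_mod_cast hx0
  have hy : 2 * (W : ℝ) + 2 ≤ (φ v).2 := by
    obtain ⟨x, y, hxy, -, -, hy1, -⟩ := hgrid v
    rw [hxy]
    show 2 * (W:ℝ) + 2 ≤ (y:ℝ)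
    have hc : (Fintype.card V : ℤ) ≤ W := by exact_mod_cast hm
    have h2 : 2 * (W : ℤ) + 2 ≤ y := by omega
    exact_mod_cast h2
  refine ⟨hx, hy, ?_⟩
  have hmono : ∀ a b : V, Relation.ReflTransGen (fun a b => F.parent a = some b) a b →
      (φ a).2 ≤ (φ b).2 := by
    intro a b h
    induction h with
    | refl => exact le_refl _
    | tail h' step ih => exact ih.trans (le_of_lt (hup _ _ step))
  have hyle : (φ v).2 ≤ (φ (F.root i)).2 := by
    rcases lt_or_eq_of_le hji with hlt | heq
    · exact le_of_lt (hiii j i hlt v (F.root i) hv Relation.ReflTransGen.refl)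
    · subst heq
      exact hmono v (F.root j) hv
  by_cases hcase : (φ (F.root i)).2 - 2 * ((φ v).1 - (φ (F.root i)).1) ≤ (φ v).2
  · have hwv : φ v ∈ wedgeS (φ (F.root i)) := by
      refine ⟨?_, hyle, hcase⟩
      rw [(hroots i).1]; exact hx
    have hline := hwedge (F.root i) (φ v) hwv (Or.inl ⟨v, rfl⟩)
    have h2 := hline.2
    rw [(hroots i).1] at h2
    linarith
  · push_neg at hcase
    rw [(hroots i).1] at hcase
    linarith
end
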